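/- Let S be symmetric positive definite with R = S², let γ > 0, and let y = √(γ/2)·Me, μ₁ = Sd, μ₂ = √(2/γ)·Δ_d. Then for any vectors e, d, Δ_d and matrices M ⪰ 0, B, the algebraic identity/estimate holds: -e^T(γM² + MBR^{-1}BᵀM)e + 2eᵀM(Δ_d + Bd) ≤ -‖y‖² + ‖μ₁‖² + ‖μ₂‖². -/

import Mathlib

open Matrix

/-- Completion-of-squares estimate in the proof of Lemma 4 (finite ℒ₂ gain):
with y = √(γ/2)·Me, μ₁ = Sd, μ₂ = √(2/γ)·Δ_d and R = S²,
-eᵀ(γM² + MBR⁻¹BᵀM)e + 2eᵀM(Δ_d + Bd) ≤ -‖y‖² + ‖μ₁‖² + ‖μ₂‖². -/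
theorem stmt13 {n m : ℕ} (M : Matrix (Fin n) (Fin n) ℝ) (B : Matrix (Fin n) (Fin m) ℝ)
    (S R : Matrix (Fin m) (Fin m) ℝ) (hM : M.PosSemidef) (hS : S.PosDef) (hR : R = S * S)
    (γ : ℝ) (hγ : 0 < γ) (e Δd : Fin n → ℝ) (d : Fin m → ℝ)
    (y : Fin n → ℝ) (hy : y = Real.sqrt (γ / 2) • (M *ᵥ e))
    (μ1 : Fin m → ℝ) (hμ1 : μ1 = S *ᵥ d)
    (μ2 : Fin n → ℝ) (hμ2 : μ2 = Real.sqrt (2 / γ) • Δd) :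
    -(e ⬝ᵥ ((γ • (M * M) + M * B * R⁻¹ * Bᵀ * M) *ᵥ e)) + 2 * (e ⬝ᵥ M *ᵥ (Δd + B *ᵥ d)) ≤
      -(y ⬝ᵥ y) + μ1 ⬝ᵥ μ1 + μ2 ⬝ᵥ μ2 := by
  subst hy hμ1 hμ2 hR
  have hMsym : Mᵀ = M := (Matrix.conjTranspose_eq_transpose_of_trivial M) ▸ hM.1
  have hSsym : Sᵀ = S := (Matrix.conjTranspose_eq_transpose_of_trivial S) ▸ hS.1
  have hSdet : IsUnit S.det := isUnit_iff_ne_zero.2 (ne_of_gt hS.det_pos)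
  have hSS : S * S⁻¹ = 1 := Matrix.mul_nonsing_inv S hSdet
  have hSinvsym : (S⁻¹)ᵀ = S⁻¹ := by rw [Matrix.transpose_nonsing_inv, hSsym]
  set u := M *ᵥ e with hu
  set t := Bᵀ *ᵥ u with ht
  set w := S⁻¹ *ᵥ t with hw
  -- symmetric-move helper
  have hmove : ∀ (x z : Fin n → ℝ), x ⬝ᵥ (M *ᵥ z) = (M *ᵥ x) ⬝ᵥ z := by
    intro x z
    rw [Matrix.dotProduct_mulVec, ← Matrix.mulVec_transpose, hMsym]
  -- first quadratic term
  have h1 : e ⬝ᵥ ((γ • (M * M)) *ᵥ e) = γ * (u ⬝ᵥ u) := by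
    rw [Matrix.smul_mulVec, dotProduct_smul, ← Matrix.mulVec_mulVec, hmove]
    simp [smul_eq_mul]; exact Or.inl rfl
  -- second quadratic term
  have hR' : (S * S)⁻¹ = S⁻¹ * S⁻¹ := Matrix.mul_inv_rev S S
  have h2 : e ⬝ᵥ ((M * B * (S * S)⁻¹ * Bᵀ * M) *ᵥ e) = w ⬝ᵥ w := by
    rw [hR']
    have : M * B * (S⁻¹ * S⁻¹) * Bᵀ * M = (M * B * S⁻¹) * (S⁻¹ * Bᵀ * M) := by
      simp only [Matrix.mul_assoc]
    rw [this, ← Matrix.mulVec_mulVec, Matrix.dotProduct_mulVec, ← Matrix.mulVec_transpose]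
    have htr : (M * B * S⁻¹)ᵀ = S⁻¹ * Bᵀ * M := by
      simp [Matrix.transpose_mul, hMsym, hSinvsym, Matrix.mul_assoc]
    rw [htr]
    simp [hw, ht, hu, Matrix.mulVec_mulVec, Matrix.mul_assoc]
  -- cross terms
  have h3 : e ⬝ᵥ M *ᵥ (Δd + B *ᵥ d) = u ⬝ᵥ Δd + w ⬝ᵥ (S *ᵥ d) := by
    rw [hmove, dotProduct_add]
    congr 1
    have : w ⬝ᵥ (S *ᵥ d) = (S *ᵥ w) ⬝ᵥ d := by
      rw [Matrix.dotProduct_mulVec, ← Matrix.mulVec_transpose, hSsym]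
    rw [this, hw, Matrix.mulVec_mulVec, hSS, Matrix.one_mulVec, ht,
      Matrix.dotProduct_mulVec, ← Matrix.mulVec_transpose]
  -- norms of y and μ2
  have hy2 : (Real.sqrt (γ / 2) • u) ⬝ᵥ (Real.sqrt (γ / 2) • u) = (γ / 2) * (u ⬝ᵥ u) := by
    rw [smul_dotProduct, dotProduct_smul, smul_eq_mul, smul_eq_mul,
      ← mul_assoc, Real.mul_self_sqrt (by positivity)]
  have hμ2' : (Real.sqrt (2 / γ) • Δd) ⬝ᵥ (Real.sqrt (2 / γ) • Δd) = (2 / γ) * (Δd ⬝ᵥ Δd) := by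
    rw [smul_dotProduct, dotProduct_smul, smul_eq_mul, smul_eq_mul,
      ← mul_assoc, Real.mul_self_sqrt (by positivity)]
  set p := S *ᵥ d with hp
  -- the two completed squares
  have hsq1 : 0 ≤ p ⬝ᵥ p - 2 * (w ⬝ᵥ p) + w ⬝ᵥ w := by
    calc (0:ℝ) ≤ (p - w) ⬝ᵥ (p - w) := by
          apply Finset.sum_nonneg; intro i _; exact mul_self_nonneg _
      _ = p ⬝ᵥ p - 2 * (w ⬝ᵥ p) + w ⬝ᵥ w := by
          simp [dotProduct_sub, sub_dotProduct, dotProduct_comm w p]; ring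
  have hsq2 : 0 ≤ u ⬝ᵥ u - 2 * ((2/γ) * (u ⬝ᵥ Δd)) + (2/γ)^2 * (Δd ⬝ᵥ Δd) := by
    calc (0:ℝ) ≤ (u - (2/γ) • Δd) ⬝ᵥ (u - (2/γ) • Δd) := by
          apply Finset.sum_nonneg; intro i _; exact mul_self_nonneg _
      _ = u ⬝ᵥ u - 2 * ((2/γ) * (u ⬝ᵥ Δd)) + (2/γ)^2 * (Δd ⬝ᵥ Δd) := by
          simp [dotProduct_sub, sub_dotProduct, dotProduct_smul,
            smul_dotProduct, smul_eq_mul, dotProduct_comm Δd u]; ring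
  rw [Matrix.add_mulVec, dotProduct_add, h1, h2, h3, hy2, hμ2']
  have hsq2' : 0 ≤ γ / 2 * (u ⬝ᵥ u) - 2 * (u ⬝ᵥ Δd) + 2 / γ * (Δd ⬝ᵥ Δd) := by
    have h := mul_nonneg (by positivity : (0:ℝ) ≤ γ / 2) hsq2
    have heq : γ / 2 * (u ⬝ᵥ u - 2 * (2 / γ * (u ⬝ᵥ Δd)) + (2 / γ) ^ 2 * (Δd ⬝ᵥ Δd))
        = γ / 2 * (u ⬝ᵥ u) - 2 * (u ⬝ᵥ Δd) + 2 / γ * (Δd ⬝ᵥ Δd) := by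
      field_simp
    linarith [heq ▸ h]
  linarith [hsq1, hsq2']
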